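/- arXiv:2101.01385 — 5 statements merged into one kernel-verified Lean document; each statement's English description precedes it below -/
import Mathlib

section
/- Let n, m be positive natural numbers, λ ∈ ℝ, δ > 0, T > 0. Let A₁ : [0,T] → ℝ^{n×n} and B : [0,T] → ℝ^{n×m} be continuous, let A₃ ∈ ℝ^{n×n} be a constant matrix, and define A₂(t) := e^{λδ}(λ Iₙ + A₁(t) + e^{λδ} A₃) A₃. Let π : [0,T] → ℝᵐ be continuous and let X : ℝ → ℝⁿ be continuous and differentiable on (0,T) with X'(t) = A₁(t) X(t) + A₂(t) Y(t) + A₃ X(t−δ) + B(t) π(t) for all t ∈ (0,T), where Y(t) := ∫_{-δ}^{0} e^{λs} X(t+s) ds. Then the process S(t) := X(t) + e^{λδ} A₃ Y(t) is differentiable on (0,T) and satisfies the delay-free linear equation S'(t) = (A₁(t) + e^{λδ} A₃) S(t) + B(t) π(t) for all t ∈ (0,T). -/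
open MeasureTheory intervalIntegral Matrix

/-- Deterministic reduction of the linear-quadratic problem with delay:
if `A₂(t) = e^{λδ}(λ Iₙ + A₁(t) + e^{λδ} A₃) A₃` and
`X'(t) = A₁(t) X(t) + A₂(t) Y(t) + A₃ X(t-δ) + B(t) π(t)` on `(0,T)`, where
`Y(t) = ∫_{-δ}^0 e^{λ s} X(t+s) ds`, then `S = X + e^{λδ} A₃ Y` satisfies the delay-free
equation `S'(t) = (A₁(t) + e^{λδ} A₃) S(t) + B(t) π(t)` on `(0,T)`. -/
theorem lq_delay_reduction
    (n m : ℕ) (hn : 0 < n) (hm : 0 < m) (L δ T : ℝ) (hδ : 0 < δ) (hT : 0 < T)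
    (A₁ : ℝ → Matrix (Fin n) (Fin n) ℝ) (B : ℝ → Matrix (Fin n) (Fin m) ℝ)
    (hA₁ : ContinuousOn A₁ (Set.Icc 0 T)) (hB : ContinuousOn B (Set.Icc 0 T))
    (A₃ : Matrix (Fin n) (Fin n) ℝ)
    (A₂ : ℝ → Matrix (Fin n) (Fin n) ℝ)
    (hA₂ : ∀ t, A₂ t =
      Real.exp (L * δ) • ((L • (1 : Matrix (Fin n) (Fin n) ℝ) + A₁ t + Real.exp (L * δ) • A₃) * A₃))
    (π : ℝ → Fin m → ℝ) (hπ : ContinuousOn π (Set.Icc 0 T))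
    (X : ℝ → Fin n → ℝ) (hX : Continuous X)
    (Y : ℝ → Fin n → ℝ)
    (hY : ∀ t, Y t = ∫ s in (-δ)..0, Real.exp (L * s) • X (t + s))
    (hX' : ∀ t ∈ Set.Ioo (0 : ℝ) T,
      HasDerivAt X (A₁ t *ᵥ X t + A₂ t *ᵥ Y t + A₃ *ᵥ X (t - δ) + B t *ᵥ π t) t) :
    ∀ t ∈ Set.Ioo (0 : ℝ) T,
      HasDerivAt (fun u => X u + Real.exp (L * δ) • (A₃ *ᵥ Y u))
        ((A₁ t + Real.exp (L * δ) • A₃) *ᵥ (X t + Real.exp (L * δ) • (A₃ *ᵥ Y t))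
          + B t *ᵥ π t) t := by
  intro t ht
  set f : ℝ → Fin n → ℝ := fun s => Real.exp (L * s) • X s with hfdef
  have hfc : Continuous f := by fun_prop
  -- derivative of u ↦ ∫_a^u f
  have hG : ∀ a x : ℝ, HasDerivAt (fun u => ∫ s in a..u, f s) (f x) x := fun a x =>
    intervalIntegral.integral_hasDerivAt_right (hfc.intervalIntegrable _ _)
      hfc.stronglyMeasurable.stronglyMeasurableAtFilter hfc.continuousAt
  have hF : HasDerivAt (fun u => ∫ s in (u - δ)..u, f s) (f t - f (t - δ)) t := by
    have h1 : HasDerivAt (fun u => ∫ s in (0:ℝ)..u, f s) (f t) t := hG 0 t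
    have h2 : HasDerivAt (fun u => ∫ s in (0:ℝ)..(u - δ), f s) (f (t - δ)) t := by
      have hsub : HasDerivAt (fun u : ℝ => u - δ) 1 t := (hasDerivAt_id t).sub_const δ
      simpa [Function.comp_def] using HasDerivAt.scomp t (hG 0 (t - δ)) hsub
    refine (h1.sub h2).congr_of_eventuallyEq (Filter.Eventually.of_forall fun u => ?_)
    exact (intervalIntegral.integral_interval_sub_left
      (hfc.intervalIntegrable _ _) (hfc.intervalIntegrable _ _)).symm
  -- rewrite Y
  have hYeq : ∀ u, Y u = Real.exp (-(L * u)) • ∫ s in (u - δ)..u, f s := by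
    intro u
    rw [hY]
    calc (∫ s in (-δ)..0, Real.exp (L * s) • X (u + s))
        = ∫ s in (-δ)..0, Real.exp (-(L * u)) • f (s + u) := by
          refine intervalIntegral.integral_congr fun s _ => ?_
          simp only [hfdef, smul_smul, ← Real.exp_add, add_comm u s]
          ring_nf
      _ = Real.exp (-(L * u)) • ∫ s in (-δ)..0, f (s + u) := by
          rw [intervalIntegral.integral_smul]
      _ = Real.exp (-(L * u)) • ∫ s in (u - δ)..u, f s := by
          rw [intervalIntegral.integral_comp_add_right f u]
          norm_num [sub_eq_add_neg, add_comm]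
  have hexp : HasDerivAt (fun u => Real.exp (-(L * u))) (-L * Real.exp (-(L * t))) t := by
    have h0 : HasDerivAt (fun u : ℝ => -(L * u)) (-L) t := by
      simpa [Pi.neg_def] using ((hasDerivAt_id t).const_mul L).neg
    simpa [mul_comm, Function.comp_def] using (Real.hasDerivAt_exp (-(L * t))).comp t h0
  have hYd : HasDerivAt Y
      (X t - Real.exp (-(L * δ)) • X (t - δ) - L • Y t) t := by
    have h := hexp.smul hF
    have h' : HasDerivAt Y
        (Real.exp (-(L * t)) • (f t - f (t - δ)) +
          (-L * Real.exp (-(L * t))) • (∫ s in (t - δ)..t, f s)) t :=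
      h.congr_of_eventuallyEq (Filter.Eventually.of_forall fun u => hYeq u)
    convert h' using 1
    rw [hYeq t]
    simp only [hfdef, smul_sub, smul_smul, ← Real.exp_add]
    rw [show -(L*t) + L*t = 0 by ring, show -(L*t) + L*(t-δ) = -(L*δ) by ring]
    simp [smul_smul]
    module
  -- compose with the linear map v ↦ A₃ *ᵥ v
  have hAY : HasDerivAt (fun u => A₃ *ᵥ Y u)
      (A₃ *ᵥ (X t - Real.exp (-(L * δ)) • X (t - δ) - L • Y t)) t := by
    have := ((Matrix.mulVecLin A₃).toContinuousLinearMap.hasFDerivAt).comp_hasDerivAt t hYd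
    simpa [Function.comp_def] using this
  have hS : HasDerivAt (fun u => X u + Real.exp (L * δ) • (A₃ *ᵥ Y u)) _ t := (hX' t ht).add (hAY.const_smul (Real.exp (L * δ)))
  convert hS using 1
  rw [hA₂ t]
  simp only [Matrix.add_mulVec, Matrix.smul_mulVec, Matrix.mulVec_add, Matrix.mulVec_sub,
    Matrix.mulVec_smul, ← Matrix.mulVec_mulVec, Matrix.one_mulVec, smul_sub, smul_smul,
    ← Real.exp_add, show L * δ + -(L * δ) = 0 by ring, Real.exp_zero, one_smul]
  module
end

section
/- Let λ ∈ ℝ, δ > 0, a ∈ ℝ, T > 0. Let μ : [0,T] → ℝ and c : [0,T] → ℝ be continuous, and define the drift functional μ̃(t, x, y) := a e^{λδ}(a e^{λδ} + λ) y + μ(t)(x + a e^{λδ} y). Let X : ℝ → ℝ be continuous and differentiable on (0,T) with X'(t) = μ̃(t, X(t), Y(t)) + a X(t−δ) − c(t) for all t ∈ (0,T), where Y(t) := ∫_{-δ}^{0} e^{λs} X(t+s) ds. Then S(t) := X(t) + a e^{λδ} Y(t) is differentiable on (0,T) and satisfies the delay-free equation S'(t) = (μ(t) + a e^{λδ}) S(t)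 − c(t) for all t ∈ (0,T). -/
open MeasureTheory intervalIntegral

/-- Deterministic reduction of the optimal consumption problem with delay:
with drift `μ̃(t,x,y) = a e^{λδ}(a e^{λδ} + λ) y + μ(t)(x + a e^{λδ} y)`, if
`X'(t) = μ̃(t, X(t), Y(t)) + a X(t-δ) - c(t)` on `(0,T)`, where
`Y(t) = ∫_{-δ}^0 e^{λ s} X(t+s) ds`, then `S = X + a e^{λδ} Y` satisfies the delay-free
equation `S'(t) = (μ(t) + a e^{λδ}) S(t) - c(t)` on `(0,T)`. -/
theorem consumption_delay_reduction
    (L δ a T : ℝ) (hδ : 0 < δ) (hT : 0 < T)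
    (μ c : ℝ → ℝ) (hμ : ContinuousOn μ (Set.Icc 0 T)) (hc : ContinuousOn c (Set.Icc 0 T))
    (X : ℝ → ℝ) (hX : Continuous X)
    (Y : ℝ → ℝ) (hY : ∀ t, Y t = ∫ s in (-δ)..0, Real.exp (L * s) * X (t + s))
    (hX' : ∀ t ∈ Set.Ioo (0 : ℝ) T,
      HasDerivAt X
        (a * Real.exp (L * δ) * (a * Real.exp (L * δ) + L) * Y t
          + μ t * (X t + a * Real.exp (L * δ) * Y t) + a * X (t - δ) - c t) t) :
    ∀ t ∈ Set.Ioo (0 : ℝ) T,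
      HasDerivAt (fun u => X u + a * Real.exp (L * δ) * Y u)
        ((μ t + a * Real.exp (L * δ)) * (X t + a * Real.exp (L * δ) * Y t) - c t) t := by
  intro t ht
  set g : ℝ → ℝ := fun u => Real.exp (L * u) * X u with hg_def
  have hg : Continuous g := by continuity
  set G : ℝ → ℝ := fun t => ∫ u in (0 : ℝ)..t, g u with hG_def
  have hG : ∀ s : ℝ, HasDerivAt G (g s) s := by
    intro s
    exact intervalIntegral.integral_hasDerivAt_right
      (hg.intervalIntegrable _ _) (hg.stronglyMeasurableAtFilter _ _) hg.continuousAt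
  -- rewrite Y in terms of G
  have hYeq : Y = fun t => Real.exp (-(L * t)) * (G t - G (t - δ)) := by
    funext t
    rw [hY t]
    have h1 : ∀ s : ℝ, Real.exp (L * s) * X (t + s)
        = (fun u => Real.exp (L * (u - t)) * X u) (s + t) := by
      intro s; simp [add_comm t s, add_sub_cancel_right]
    calc ∫ s in (-δ)..0, Real.exp (L * s) * X (t + s)
        = ∫ s in (-δ)..0, (fun u => Real.exp (L * (u - t)) * X u) (s + t) := by
          simp only [h1]
      _ = ∫ u in (-δ + t)..(0 + t), Real.exp (L * (u - t)) * X u := by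
          exact intervalIntegral.integral_comp_add_right
            (f := fun u => Real.exp (L * (u - t)) * X u) t
      _ = ∫ u in (t - δ)..t, Real.exp (-(L * t)) * g u := by
          rw [show -δ + t = t - δ by ring, zero_add]
          congr 1; funext u
          show _ = Real.exp (-(L * t)) * (Real.exp (L * u) * X u)
          rw [← mul_assoc, ← Real.exp_add]
          ring_nf
      _ = Real.exp (-(L * t)) * ∫ u in (t - δ)..t, g u := by
          rw [intervalIntegral.integral_const_mul]
      _ = Real.exp (-(L * t)) * (G t - G (t - δ)) := by
          congr 1
          have i1 : IntervalIntegrable g volume (0 : ℝ) (t - δ) :=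
            hg.intervalIntegrable _ _
          have i2 : IntervalIntegrable g volume (t - δ) t :=
            hg.intervalIntegrable _ _
          have h := intervalIntegral.integral_add_adjacent_intervals i1 i2
          show _ = (∫ u in (0:ℝ)..t, g u) - ∫ u in (0:ℝ)..(t - δ), g u
          linarith [h]
  have hE : HasDerivAt (fun u : ℝ => Real.exp (-(L * u))) (-L * Real.exp (-(L * t))) t := by
    have h : HasDerivAt (fun u : ℝ => -(L * u)) (-L) t := by
      simpa using ((hasDerivAt_id t).const_mul L).fun_neg
    simpa [mul_comm] using h.exp
  have hFd : HasDerivAt (fun u => G u - G (u - δ)) (g t - g (t - δ)) t := by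
    have h2 : HasDerivAt (fun u => G (u - δ)) (g (t - δ)) t := by
      have := (hG (t - δ)).comp t (((hasDerivAt_id t).sub_const δ))
      simpa [Function.comp_def] using this
    exact (hG t).sub h2
  have e1 : Real.exp (-(L * t)) * g t = X t := by
    show Real.exp (-(L * t)) * (Real.exp (L * t) * X t) = X t
    rw [← mul_assoc, ← Real.exp_add]; simp
  have e2 : Real.exp (-(L * t)) * g (t - δ) = Real.exp (-(L * δ)) * X (t - δ) := by
    show Real.exp (-(L * t)) * (Real.exp (L * (t - δ)) * X (t - δ)) = _
    rw [← mul_assoc, ← Real.exp_add, show -(L * t) + L * (t - δ) = -(L * δ) by ring]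
  have hYt : Y t = Real.exp (-(L * t)) * (G t - G (t - δ)) := congrFun hYeq t
  have hY'' : HasDerivAt Y
      (X t - Real.exp (-(L * δ)) * X (t - δ)
        - L * (Real.exp (-(L * t)) * (G t - G (t - δ)))) t := by
    rw [hYeq]
    have h := hE.fun_mul hFd
    refine h.congr_deriv ?_
    nlinarith [e1, e2]
  rw [← hYt] at hY''
  have hS := (hX' t ht).fun_add (hY''.const_mul (a * Real.exp (L * δ)))
  refine hS.congr_deriv ?_
  have hexp : Real.exp (L * δ) * Real.exp (-(L * δ)) = 1 := by
    rw [← Real.exp_add]; simp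
  linear_combination -(a * X (t - δ)) * hexp
end

section
/- Let λ > 0, μ₁, μ₂, r ∈ ℝ, T > 0, and let η ∈ ℝ satisfy η² + (r+λ)η = μ₂. Let π, c : [0,T] → ℝ be continuous. Let X : ℝ → ℝ be continuous, bounded on (−∞, T], and differentiable on (0,T) with X'(t) = ((μ₁ − r)π(t) − c(t) + r) X(t) + μ₂ Y(t) for all t ∈ (0,T), where Y(t) := ∫_{-∞}^{0} e^{λs} X(t+s) ds. Then S(t) := X(t) + η Y(t) is differentiable on (0,T) and satisfies the delay-free equation S'(t) = ((μ₁ − r)π(t) − c(t)) X(t) + (r + η) S(t) for all t ∈ (0,T). -/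
open MeasureTheory

/-- Deterministic reduction of the portfolio optimization problem with
complete memory: if `η² + (r+λ)η = μ₂` and
`X'(t) = ((μ₁ - r)π(t) - c(t) + r) X(t) + μ₂ Y(t)` on `(0,T)`, where
`Y(t) = ∫_{-∞}^0 e^{λ s} X(t+s) ds` and `X` is continuous and bounded on `(-∞,T]`,
then `S = X + η Y` satisfies the delay-free equation
`S'(t) = ((μ₁-r)π(t) - c(t)) X(t) + (r+η) S(t)` on `(0,T)`. -/
theorem portfolio_delay_reduction
    (L μ₁ μ₂ r η T : ℝ) (hL : 0 < L) (hT : 0 < T)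
    (hη : η ^ 2 + (r + L) * η = μ₂)
    (π c : ℝ → ℝ) (hπ : ContinuousOn π (Set.Icc 0 T)) (hc : ContinuousOn c (Set.Icc 0 T))
    (X : ℝ → ℝ) (hX : Continuous X) (hXb : ∃ M : ℝ, ∀ t ≤ T, |X t| ≤ M)
    (Y : ℝ → ℝ) (hY : ∀ t, Y t = ∫ s in Set.Iic (0 : ℝ), Real.exp (L * s) * X (t + s))
    (hX' : ∀ t ∈ Set.Ioo (0 : ℝ) T,
      HasDerivAt X (((μ₁ - r) * π t - c t + r) * X t + μ₂ * Y t) t) :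
    ∀ t ∈ Set.Ioo (0 : ℝ) T,
      HasDerivAt (fun u => X u + η * Y u)
        (((μ₁ - r) * π t - c t) * X t + (r + η) * (X t + η * Y t)) t := by
  obtain ⟨M, hM⟩ := hXb
  set g : ℝ → ℝ := fun u => Real.exp (L * u) * X u with hg_def
  have hg_cont : Continuous g :=
    (Real.continuous_exp.comp (continuous_const.mul continuous_id)).mul hX
  -- integrability of exp(L·) on Iic a
  have hexp : ∀ a : ℝ, IntegrableOn (fun u => Real.exp (L * u)) (Set.Iic a) := by
    intro a
    have h1 : IntegrableOn Real.exp (Set.Iic (L * a)) := integrableOn_exp_Iic _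
    have h2 : Integrable ((Set.Iic (L * a)).indicator Real.exp) :=
      (integrable_indicator_iff measurableSet_Iic).mpr h1
    have h3 : Integrable (fun u => (Set.Iic (L * a)).indicator Real.exp (L * u)) :=
      (MeasureTheory.integrable_comp_mul_left_iff
        ((Set.Iic (L * a)).indicator Real.exp) hL.ne').mpr h2
    have h4 : (fun u => (Set.Iic (L * a)).indicator Real.exp (L * u))
        = (Set.Iic a).indicator (fun u => Real.exp (L * u)) := by
      ext u
      by_cases h : u ≤ a
      · rw [Set.indicator_of_mem (show u ∈ Set.Iic a from h),
          Set.indicator_of_mem (show L * u ∈ Set.Iic (L * a) from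
            mul_le_mul_of_nonneg_left h hL.le)]
      · rw [Set.indicator_of_notMem (show u ∉ Set.Iic a from h),
          Set.indicator_of_notMem]
        simp only [Set.mem_Iic, not_le] at h ⊢
        exact (mul_lt_mul_iff_right₀ hL).mpr h
    rw [h4] at h3
    exact (integrable_indicator_iff measurableSet_Iic).mp h3
  -- integrability of g on Iic a for a ≤ T
  have hgint : ∀ a ≤ T, IntegrableOn g (Set.Iic a) := by
    intro a ha
    refine Integrable.mono ((hexp a).const_mul M)
      (hg_cont.aestronglyMeasurable.restrict) ?_
    refine (ae_restrict_iff' measurableSet_Iic).mpr (ae_of_all _ fun u hu => ?_)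
    have hXu : |X u| ≤ M := hM u (le_trans hu ha)
    have h0 : (0 : ℝ) < Real.exp (L * u) := Real.exp_pos _
    calc ‖g u‖ = Real.exp (L * u) * |X u| := by
          simp [hg_def, abs_mul, abs_of_pos h0]
      _ ≤ Real.exp (L * u) * |M| := by
          exact mul_le_mul_of_nonneg_left (hXu.trans (le_abs_self M)) h0.le
      _ ≤ ‖M * Real.exp (L * u)‖ := by
          rw [norm_mul, Real.norm_eq_abs, Real.norm_eq_abs, Real.abs_exp, mul_comm]
  set G : ℝ → ℝ := fun a => ∫ u in Set.Iic a, g u with hG_def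
  -- Y in terms of G
  have hYeq : ∀ a ≤ T, Y a = Real.exp (-(L * a)) * G a := by
    intro a _
    have h1 : ∀ s : ℝ, Real.exp (L * s) * X (a + s) = Real.exp (-(L * a)) * g (s + a) := by
      intro s
      have : Real.exp (-(L * a)) * Real.exp (L * (s + a)) = Real.exp (L * s) := by
        rw [← Real.exp_add]; congr 1; ring
      simp only [hg_def]
      rw [show a + s = s + a from add_comm a s, ← mul_assoc, this]
    rw [hY a]
    simp only [h1]
    rw [MeasureTheory.integral_const_mul]
    congr 1
    have hpre : (fun s : ℝ => s + a) ⁻¹' Set.Iic a = Set.Iic (0 : ℝ) := by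
      ext s; simp [Set.mem_Iic]
    rw [show Set.Iic (0 : ℝ) = (fun s : ℝ => s + a) ⁻¹' Set.Iic a from hpre.symm]
    exact (measurePreserving_add_right volume a).setIntegral_preimage_emb
      (measurableEmbedding_addRight a) g _
  -- derivative of G
  have hGderiv : ∀ t ∈ Set.Ioo (0 : ℝ) T, HasDerivAt G (g t) t := by
    intro t ht
    have heq : (fun u => G 0 + ∫ x in (0 : ℝ)..u, g x) =ᶠ[nhds t] G := by
      filter_upwards [Iio_mem_nhds ht.2] with u hu
      have h := intervalIntegral.integral_Iic_sub_Iic (μ := volume)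
        (hgint 0 hT.le) (hgint u (le_of_lt hu))
      simp only [hG_def]
      linarith
    have hd : HasDerivAt (fun u => G 0 + ∫ x in (0 : ℝ)..u, g x) (g t) t := by
      have h := intervalIntegral.integral_hasDerivAt_right
        (hg_cont.intervalIntegrable 0 t)
        (hg_cont.stronglyMeasurableAtFilter volume (nhds t))
        hg_cont.continuousAt
      exact h.const_add (G 0)
    exact hd.congr_of_eventuallyEq heq.symm
  -- derivative of Y
  have hYd : ∀ t ∈ Set.Ioo (0 : ℝ) T, HasDerivAt Y (X t - L * Y t) t := by
    intro t ht
    have he : HasDerivAt (fun u => Real.exp (-(L * u))) (-L * Real.exp (-(L * t))) t := by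
      have h0 : HasDerivAt (fun u : ℝ => -(L * u)) (-L) t := by
        simpa using (hasDerivAt_id t).const_mul (-L)
      simpa [mul_comm] using h0.exp
    have h1 : HasDerivAt (fun u => Real.exp (-(L * u)) * G u)
        (-L * Real.exp (-(L * t)) * G t + Real.exp (-(L * t)) * g t) t :=
      he.mul (hGderiv t ht)
    have heq : (fun u => Real.exp (-(L * u)) * G u) =ᶠ[nhds t] Y := by
      filter_upwards [Iio_mem_nhds ht.2] with u hu
      exact (hYeq u hu.le).symm
    have h2 := h1.congr_of_eventuallyEq heq.symm
    refine h2.congr_deriv ?_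
    have hXt : Real.exp (-(L * t)) * g t = X t := by
      simp only [hg_def]
      rw [← mul_assoc, ← Real.exp_add]
      simp
    rw [hYeq t (le_of_lt ht.2), hXt]
    ring
  intro t ht
  have h := (hX' t ht).add ((hYd t ht).const_mul η)
  refine h.congr_deriv ?_
  linear_combination (-Y t) * hη
end

section
/- Let n, m be positive natural numbers and T > 0. Let Ā : [0,T] → ℝ^{n×n}, B : [0,T] → ℝ^{n×m}, Q : [0,T] → ℝ^{n×n}, R : [0,T] → ℝ^{m×m} be continuous, with Q(t) symmetric positive semi-definite and R(t) symmetric positive definite for each t, and let G ∈ ℝ^{n×n} be symmetric positive semi-definite. Suppose P : [0,T] → ℝ^{n×n} is continuously differentiable with P(t) symmetric for each t, P(T) = G, and P'(t) = P(t) B(t) R(t)⁻¹ B(t)ᵀ P(t) − Ā(t)ᵀ P(t) − P(t) Ā(t) − Q(t) on [0,T]. Then P(t) is positive semi-definite for every t ∈ [0,T]. -/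
open Matrix

attribute [local instance] Matrix.normedAddCommGroup Matrix.normedSpace

open Set Filter Topology

set_option maxHeartbeats 1000000

attribute [local instance] Matrix.normedAddCommGroup Matrix.normedSpace

private lemma dp_self_nonneg {n : ℕ} (v : Fin n → ℝ) : 0 ≤ v ⬝ᵥ v :=
  Finset.sum_nonneg fun _ _ => mul_self_nonneg _

private lemma dp_scale {n : ℕ} (A : Matrix (Fin n) (Fin n) ℝ)
    (h : ∀ u : Fin n → ℝ, u ⬝ᵥ u = 1 → 0 ≤ u ⬝ᵥ (A *ᵥ u)) (y : Fin n → ℝ) :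
    0 ≤ y ⬝ᵥ (A *ᵥ y) := by
  rcases eq_or_ne y 0 with rfl | hy
  · simp
  · have hc0 : y ⬝ᵥ y ≠ 0 := fun h0 => hy (dotProduct_self_eq_zero.mp h0)
    have hc : 0 < y ⬝ᵥ y := lt_of_le_of_ne (dp_self_nonneg y) (Ne.symm hc0)
    set r : ℝ := (Real.sqrt (y ⬝ᵥ y))⁻¹ with hr
    have hrpos : 0 < r := inv_pos.mpr (Real.sqrt_pos.mpr hc)
    have hs : Real.sqrt (y ⬝ᵥ y) * Real.sqrt (y ⬝ᵥ y) = y ⬝ᵥ y :=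
      Real.mul_self_sqrt hc.le
    have hu : (r • y) ⬝ᵥ (r • y) = 1 := by
      rw [smul_dotProduct, dotProduct_smul, smul_eq_mul, smul_eq_mul, hr]
      field_simp
      exact (Real.sq_sqrt hc.le).symm
    have h2 := h (r • y) hu
    rw [smul_dotProduct, mulVec_smul, dotProduct_smul, smul_eq_mul, smul_eq_mul] at h2
    nlinarith [mul_pos hrpos hrpos]

private lemma isCompact_dpSphere (n : ℕ) : IsCompact {x : Fin n → ℝ | x ⬝ᵥ x = 1} := by
  have hcl : IsClosed {x : Fin n → ℝ | x ⬝ᵥ x = 1} :=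
    isClosed_eq (continuous_id.dotProduct continuous_id) continuous_const
  refine (isCompact_closedBall (0 : Fin n → ℝ) 1).of_isClosed_subset hcl ?_
  intro x hx
  rw [mem_closedBall_zero_iff, pi_norm_le_iff_of_nonneg zero_le_one]
  intro i
  rw [Real.norm_eq_abs, abs_le_one_iff_mul_self_le_one]
  have h1 : x i * x i ≤ x ⬝ᵥ x :=
    Finset.single_le_sum (f := fun j => x j * x j) (fun j _ => mul_self_nonneg _)
      (Finset.mem_univ i)
  have h2 : x ⬝ᵥ x = 1 := hx
  linarith

private lemma quad_bound {n : ℕ} (T : ℝ) (M : ℝ → Matrix (Fin n) (Fin n) ℝ)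
    (hM : Continuous M) :
    ∃ C : ℝ, 0 ≤ C ∧ ∀ t ∈ Icc (0:ℝ) T, ∀ x : Fin n → ℝ, x ⬝ᵥ x = 1 →
      |x ⬝ᵥ (M t *ᵥ x)| ≤ C := by
  have hK : IsCompact (Icc (0:ℝ) T ×ˢ {x : Fin n → ℝ | x ⬝ᵥ x = 1}) :=
    isCompact_Icc.prod (isCompact_dpSphere n)
  have hf : ContinuousOn (fun p : ℝ × (Fin n → ℝ) => p.2 ⬝ᵥ (M p.1 *ᵥ p.2))
      (Icc (0:ℝ) T ×ˢ {x : Fin n → ℝ | x ⬝ᵥ x = 1}) :=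
    (continuous_snd.dotProduct
      ((hM.comp continuous_fst).matrix_mulVec continuous_snd)).continuousOn
  obtain ⟨C, hC⟩ := hK.exists_bound_of_continuousOn hf
  refine ⟨max C 0, le_max_right _ _, fun t ht x hx => ?_⟩
  have := hC (t, x) ⟨ht, hx⟩
  rw [Real.norm_eq_abs] at this
  exact this.trans (le_max_left _ _)

/-- If `P` solves the Riccati equation
`P' = P B R⁻¹ Bᵀ P - ĀᵀP - PĀ - Q` on `[0,T]` with `P(T) = G`, where `Q(t)` is symmetric
positive semi-definite, `R(t)` is symmetric positive definite, and `G` is symmetric positive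
semi-definite, then `P(t)` is positive semi-definite for every `t ∈ [0,T]`. -/
theorem riccati_posSemidef
    (n m : ℕ) (hn : 0 < n) (hm : 0 < m) (T : ℝ) (hT : 0 < T)
    (Abar : ℝ → Matrix (Fin n) (Fin n) ℝ) (B : ℝ → Matrix (Fin n) (Fin m) ℝ)
    (Q : ℝ → Matrix (Fin n) (Fin n) ℝ) (R : ℝ → Matrix (Fin m) (Fin m) ℝ)
    (hAbar : ContinuousOn Abar (Set.Icc 0 T)) (hB : ContinuousOn B (Set.Icc 0 T))
    (hQc : ContinuousOn Q (Set.Icc 0 T)) (hRc : ContinuousOn R (Set.Icc 0 T))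
    (hQ : ∀ t ∈ Set.Icc (0 : ℝ) T, (Q t).PosSemidef)
    (hR : ∀ t ∈ Set.Icc (0 : ℝ) T, (R t).PosDef)
    (G : Matrix (Fin n) (Fin n) ℝ) (hG : G.PosSemidef)
    (P : ℝ → Matrix (Fin n) (Fin n) ℝ)
    (hPsymm : ∀ t ∈ Set.Icc (0 : ℝ) T, (P t).IsSymm)
    (hPT : P T = G)
    (hP : ∀ t ∈ Set.Icc (0 : ℝ) T,
      HasDerivWithinAt P
        (P t * B t * (R t)⁻¹ * (B t)ᵀ * P t - (Abar t)ᵀ * P t - P t * Abar t - Q t)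
        (Set.Icc 0 T) t) :
    ∀ t ∈ Set.Icc (0 : ℝ) T, (P t).PosSemidef := by
  have hT0 : (0:ℝ) ≤ T := hT.le
  -- clamp to the interval
  set cl : ℝ → ℝ := fun t => max 0 (min t T) with hcldef
  have hclc : Continuous cl := continuous_const.max (continuous_id.min continuous_const)
  have hclmem : ∀ t, cl t ∈ Icc (0:ℝ) T :=
    fun t => ⟨le_max_left _ _, max_le hT0 (min_le_right _ _)⟩
  have hcleq : ∀ t ∈ Icc (0:ℝ) T, cl t = t := by
    intro t ht
    simp only [hcldef]
    rw [min_eq_left ht.2, max_eq_right ht.1]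
  have hPcont : ContinuousOn P (Icc 0 T) := fun t ht => (hP t ht).continuousWithinAt
  have hPc : Continuous (fun t => P (cl t)) := hPcont.comp_continuous hclc hclmem
  have hAc : Continuous (fun t => Abar (cl t)) := hAbar.comp_continuous hclc hclmem
  have hBc : Continuous (fun t => B (cl t)) := hB.comp_continuous hclc hclmem
  have hRcc : Continuous (fun t => R (cl t)) := hRc.comp_continuous hclc hclmem
  have hRinv : Continuous (fun t => (R (cl t))⁻¹) := by
    rw [continuous_iff_continuousAt]
    intro t
    refine ContinuousAt.comp (continuousAt_matrix_inv _ ?_) hRcc.continuousAt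
    have hdet : (R (cl t)).det ≠ 0 := (hR (cl t) (hclmem t)).det_pos.ne'
    rw [Ring.inverse_eq_inv']
    exact continuousAt_inv₀ hdet
  have hSc : Continuous (fun t => B (cl t) * (R (cl t))⁻¹ * (B (cl t))ᵀ) :=
    (hBc.matrix_mul hRinv).matrix_mul hBc.matrix_transpose
  obtain ⟨Ca, hCa0, hCa⟩ := quad_bound T _ hAc
  obtain ⟨Cs, hCs0, hCs⟩ := quad_bound T _ hSc
  obtain ⟨Cp, hCp0, hCp⟩ := quad_bound T _ hPc
  have hCa' : ∀ t ∈ Icc (0:ℝ) T, ∀ x : Fin n → ℝ, x ⬝ᵥ x = 1 →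
      |x ⬝ᵥ (Abar t *ᵥ x)| ≤ Ca := by
    intro t ht x hx; have h0 := hCa t ht x hx; rwa [hcleq t ht] at h0
  have hCs' : ∀ t ∈ Icc (0:ℝ) T, ∀ x : Fin n → ℝ, x ⬝ᵥ x = 1 →
      |x ⬝ᵥ ((B t * (R t)⁻¹ * (B t)ᵀ) *ᵥ x)| ≤ Cs := by
    intro t ht x hx; have h0 := hCs t ht x hx; rwa [hcleq t ht] at h0
  have hCp' : ∀ t ∈ Icc (0:ℝ) T, ∀ x : Fin n → ℝ, x ⬝ᵥ x = 1 →
      |x ⬝ᵥ (P t *ᵥ x)| ≤ Cp := by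
    intro t ht x hx; have h0 := hCp t ht x hx; rwa [hcleq t ht] at h0
  set lam : ℝ := -(Cp * Cs + 2 * Ca + 1) with hlam
  -- main claim
  have key : ∀ ε : ℝ, 0 < ε → ∀ t ∈ Icc (0:ℝ) T, ∀ u : Fin n → ℝ, u ⬝ᵥ u = 1 →
      0 < u ⬝ᵥ (P t *ᵥ u) + ε * Real.exp (lam * (t - T)) := by
    intro ε hε
    by_contra hcon
    push_neg at hcon
    obtain ⟨t₀, ht₀, u₀, hu₀, hle0⟩ := hcon
    set g : ℝ × (Fin n → ℝ) → ℝ :=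
      fun p => p.2 ⬝ᵥ (P (cl p.1) *ᵥ p.2) + ε * Real.exp (lam * (p.1 - T)) with hgdef
    have hgc : Continuous g := by
      refine Continuous.add ?_ ?_
      · exact continuous_snd.dotProduct
          ((hPc.comp continuous_fst).matrix_mulVec continuous_snd)
      · exact continuous_const.mul
          (Real.continuous_exp.comp (continuous_const.mul (continuous_fst.sub continuous_const)))
    set Cset := ((Icc (0:ℝ) T ×ˢ {x : Fin n → ℝ | x ⬝ᵥ x = 1}) ∩ {p | g p ≤ 0}) with hCsetdef
    have hCsetC : IsCompact Cset :=
      (isCompact_Icc.prod (isCompact_dpSphere n)).inter_right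
        (isClosed_le hgc continuous_const)
    have hCne : ((t₀, u₀) : ℝ × (Fin n → ℝ)) ∈ Cset := by
      refine ⟨⟨ht₀, hu₀⟩, ?_⟩
      show g (t₀, u₀) ≤ 0
      rw [hgdef]
      simpa [hcleq t₀ ht₀] using hle0
    set K' := Prod.fst '' Cset with hK'def
    have hK'C : IsCompact K' := hCsetC.image continuous_fst
    have hK'ne : K'.Nonempty := ⟨t₀, ⟨(t₀, u₀), hCne, rfl⟩⟩
    have hmem := hK'C.sSup_mem hK'ne
    obtain ⟨⟨t₁, x⟩, hpmem, hfst⟩ := hmem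
    have hub : ∀ s ∈ K', s ≤ t₁ := by
      intro s hs
      have : s ≤ sSup K' := le_csSup hK'C.bddAbove hs
      rwa [← hfst] at this
    have ht₁Icc : t₁ ∈ Icc (0:ℝ) T := hpmem.1.1
    have hxS : x ⬝ᵥ x = 1 := hpmem.1.2
    have hgx : g (t₁, x) ≤ 0 := hpmem.2
    have hgx' : x ⬝ᵥ (P t₁ *ᵥ x) + ε * Real.exp (lam * (t₁ - T)) ≤ 0 := by
      have h0 := hgx; rw [hgdef] at h0; simpa [hcleq t₁ ht₁Icc] using h0
    have ht₁T : t₁ < T := by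
      rcases lt_or_eq_of_le ht₁Icc.2 with h | h
      · exact h
      · exfalso
        have h1 : 0 ≤ x ⬝ᵥ (G *ᵥ x) := by
          have h2 := hG.dotProduct_mulVec_nonneg x; rwa [star_trivial] at h2
        rw [h, hPT] at hgx'
        rw [sub_self, mul_zero, Real.exp_zero, mul_one] at hgx'
        linarith
    -- positivity strictly above `t₁`
    have hpos : ∀ t ∈ Ioc t₁ T, ∀ u : Fin n → ℝ, u ⬝ᵥ u = 1 →
        0 < u ⬝ᵥ (P t *ᵥ u) + ε * Real.exp (lam * (t - T)) := by
      intro t htI u hu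
      by_contra hc
      push_neg at hc
      have htIcc : t ∈ Icc (0:ℝ) T := ⟨le_trans ht₁Icc.1 htI.1.le, htI.2⟩
      have hmem2 : (t, u) ∈ Cset := by
        refine ⟨⟨htIcc, hu⟩, ?_⟩
        show g (t, u) ≤ 0
        rw [hgdef]
        simpa [hcleq t htIcc] using hc
      have : t ≤ t₁ := hub t ⟨(t, u), hmem2, rfl⟩
      exact absurd htI.1 (not_lt.mpr this)
    set e : ℝ := Real.exp (lam * (t₁ - T)) with hedef
    have he0 : 0 < e := Real.exp_pos _
    set δ : ℝ := ε * e with hδdef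
    have hδ0 : 0 < δ := mul_pos hε he0
    set Mm : Matrix (Fin n) (Fin n) ℝ := P t₁ + δ • (1 : Matrix (Fin n) (Fin n) ℝ) with hMmdef
    have hquadM : ∀ u : Fin n → ℝ, u ⬝ᵥ u = 1 →
        u ⬝ᵥ (Mm *ᵥ u) = u ⬝ᵥ (P t₁ *ᵥ u) + δ := by
      intro u hu
      rw [hMmdef, add_mulVec, dotProduct_add, smul_mulVec, one_mulVec,
        dotProduct_smul, smul_eq_mul, hu, mul_one]
    have hNB : (𝓝[Ioc t₁ T] t₁).NeBot := left_nhdsWithin_Ioc_neBot ht₁T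
    have hMPSD : Mm.PosSemidef := by
      refine PosSemidef.of_dotProduct_mulVec_nonneg ?_ ?_
      · show Mmᴴ = Mm
        rw [conjTranspose_eq_transpose_of_trivial, hMmdef, transpose_add, transpose_smul,
          transpose_one, (hPsymm t₁ ht₁Icc).eq]
      · intro y
        rw [star_trivial]
        refine dp_scale _ (fun u hu => ?_) y
        rw [hquadM u hu]
        have hgu : Continuous fun t => g (t, u) :=
          hgc.comp (continuous_id.prodMk continuous_const)
        have hlim : Tendsto (fun t => g (t, u)) (𝓝[Ioc t₁ T] t₁) (𝓝 (g (t₁, u))) :=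
          (hgu.tendsto t₁).mono_left nhdsWithin_le_nhds
        have hge : 0 ≤ g (t₁, u) := by
          refine ge_of_tendsto hlim ?_
          filter_upwards [self_mem_nhdsWithin] with t ht
          have h2 := hpos t ht u hu
          have htIcc : t ∈ Icc (0:ℝ) T := ⟨le_trans ht₁Icc.1 ht.1.le, ht.2⟩
          rw [hgdef]
          simpa [hcleq t htIcc] using h2.le
        rw [hgdef] at hge
        simpa [hcleq t₁ ht₁Icc] using hge
    have hMx0 : Mm *ᵥ x = 0 := by
      have h1 : x ⬝ᵥ (Mm *ᵥ x) ≤ 0 := by rw [hquadM x hxS]; exact hgx'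
      have h2 : 0 ≤ x ⬝ᵥ (Mm *ᵥ x) := by
        have h3 := hMPSD.dotProduct_mulVec_nonneg x; rwa [star_trivial] at h3
      have h3 : star x ⬝ᵥ (Mm *ᵥ x) = 0 := by rw [star_trivial]; linarith
      exact (hMPSD.dotProduct_mulVec_zero_iff x).mp h3
    have hPx : P t₁ *ᵥ x = (-δ) • x := by
      have h0 := hMx0
      rw [hMmdef, add_mulVec, smul_mulVec, one_mulVec] at h0
      rw [neg_smul]
      exact eq_neg_of_add_eq_zero_left h0
    -- the function φ along the kernel vector
    set φ : ℝ → ℝ := fun t => x ⬝ᵥ (P t *ᵥ x) + ε * Real.exp (lam * (t - T)) with hφdef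
    have hφt₁ : φ t₁ = 0 := by
      rw [hφdef]
      show x ⬝ᵥ (P t₁ *ᵥ x) + ε * Real.exp (lam * (t₁ - T)) = 0
      rw [hPx, dotProduct_smul, smul_eq_mul, hxS, mul_one, ← hedef, ← hδdef]
      ring
    have hφpos : ∀ t ∈ Ioc t₁ T, 0 < φ t := fun t ht => hpos t ht x hxS
    set Dmat : Matrix (Fin n) (Fin n) ℝ :=
      P t₁ * B t₁ * (R t₁)⁻¹ * (B t₁)ᵀ * P t₁ - (Abar t₁)ᵀ * P t₁ - P t₁ * Abar t₁ - Q t₁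
      with hDmatdef
    have hder : HasDerivWithinAt φ
        (x ⬝ᵥ (Dmat *ᵥ x) + ε * (Real.exp (lam * (t₁ - T)) * lam)) (Icc t₁ T) t₁ := by
      have h1 : HasDerivWithinAt P Dmat (Icc t₁ T) t₁ :=
        (hP t₁ ht₁Icc).mono (Icc_subset_Icc ht₁Icc.1 le_rfl)
      set L : Matrix (Fin n) (Fin n) ℝ →ₗ[ℝ] ℝ :=
        { toFun := fun A => x ⬝ᵥ (A *ᵥ x)
          map_add' := fun A A' => by simp [add_mulVec, dotProduct_add]
          map_smul' := fun c A => by simp [smul_mulVec, dotProduct_smul] } with hLdef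
      have h2 : HasDerivWithinAt (fun t => x ⬝ᵥ (P t *ᵥ x)) (x ⬝ᵥ (Dmat *ᵥ x))
          (Icc t₁ T) t₁ := by
        have h3 := ((LinearMap.toContinuousLinearMap L).hasFDerivAt
          (x := P t₁)).comp_hasDerivWithinAt t₁ h1
        exact h3
      have h3 : HasDerivAt (fun t => ε * Real.exp (lam * (t - T)))
          (ε * (Real.exp (lam * (t₁ - T)) * lam)) t₁ := by
        have h4 : HasDerivAt (fun t : ℝ => lam * (t - T)) lam t₁ := by
          simpa using ((hasDerivAt_id t₁).sub_const T).const_mul lam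
        simpa using h4.exp.const_mul ε
      exact h2.add h3.hasDerivWithinAt
    have hd0 : 0 ≤ x ⬝ᵥ (Dmat *ᵥ x) + ε * (Real.exp (lam * (t₁ - T)) * lam) := by
      have hslope := hasDerivWithinAt_iff_tendsto_slope.mp hder
      rw [Icc_diff_left] at hslope
      refine ge_of_tendsto hslope ?_
      filter_upwards [self_mem_nhdsWithin] with t ht
      rw [slope_def_field, hφt₁, sub_zero]
      have h5 : 0 < t - t₁ := sub_pos.mpr ht.1
      exact div_nonneg (hφpos t ht).le h5.le
    -- algebraic evaluation of the derivative at `t₁`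
    have hsym := (hPsymm t₁ ht₁Icc).eq
    have hsymmdot : ∀ w : Fin n → ℝ, x ⬝ᵥ (P t₁ *ᵥ w) = (P t₁ *ᵥ x) ⬝ᵥ w := by
      intro w
      rw [dotProduct_mulVec]
      congr 1
      conv_lhs => rw [← hsym]
      rw [vecMul_transpose]
    have hterm1 : x ⬝ᵥ ((P t₁ * B t₁ * (R t₁)⁻¹ * (B t₁)ᵀ * P t₁) *ᵥ x)
        = δ^2 * (x ⬝ᵥ ((B t₁ * (R t₁)⁻¹ * (B t₁)ᵀ) *ᵥ x)) := by
      have hassoc : P t₁ * B t₁ * (R t₁)⁻¹ * (B t₁)ᵀ * P t₁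
          = P t₁ * ((B t₁ * (R t₁)⁻¹ * (B t₁)ᵀ) * P t₁) := by
        simp only [Matrix.mul_assoc]
      rw [hassoc, ← mulVec_mulVec, hsymmdot, hPx, ← mulVec_mulVec, hPx, mulVec_smul,
        smul_dotProduct, dotProduct_smul, smul_eq_mul, smul_eq_mul]
      ring
    have hterm2 : x ⬝ᵥ (((Abar t₁)ᵀ * P t₁) *ᵥ x) = -δ * (x ⬝ᵥ (Abar t₁ *ᵥ x)) := by
      rw [← mulVec_mulVec, hPx, mulVec_smul, dotProduct_smul, smul_eq_mul,
        mulVec_transpose, dotProduct_comm, ← dotProduct_mulVec]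
      try ring
    have hterm3 : x ⬝ᵥ ((P t₁ * Abar t₁) *ᵥ x) = -δ * (x ⬝ᵥ (Abar t₁ *ᵥ x)) := by
      rw [← mulVec_mulVec, hsymmdot, hPx, smul_dotProduct, smul_eq_mul]
      try ring
    have hq4 : 0 ≤ x ⬝ᵥ (Q t₁ *ᵥ x) := by
      have h0 := (hQ t₁ ht₁Icc).dotProduct_mulVec_nonneg x; rwa [star_trivial] at h0
    have hDx : x ⬝ᵥ (Dmat *ᵥ x)
        = δ^2 * (x ⬝ᵥ ((B t₁ * (R t₁)⁻¹ * (B t₁)ᵀ) *ᵥ x))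
          + 2 * δ * (x ⬝ᵥ (Abar t₁ *ᵥ x)) - x ⬝ᵥ (Q t₁ *ᵥ x) := by
      rw [hDmatdef, sub_mulVec, sub_mulVec, sub_mulVec, dotProduct_sub, dotProduct_sub,
        dotProduct_sub, hterm1, hterm2, hterm3]
      ring
    have hpval : x ⬝ᵥ (P t₁ *ᵥ x) = -δ := by
      rw [hPx, dotProduct_smul, smul_eq_mul, hxS, mul_one]
    have hδCp : δ ≤ Cp := by
      have h0 := hCp' t₁ ht₁Icc x hxS
      rw [hpval, abs_neg, abs_of_pos hδ0] at h0
      exact h0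
    have hsB := abs_le.mp (hCs' t₁ ht₁Icc x hxS)
    have haB := abs_le.mp (hCa' t₁ ht₁Icc x hxS)
    have heq : ε * (Real.exp (lam * (t₁ - T)) * lam) = δ * lam := by
      rw [hδdef, hedef]; ring
    rw [hDx, heq] at hd0
    set s := x ⬝ᵥ ((B t₁ * (R t₁)⁻¹ * (B t₁)ᵀ) *ᵥ x)
    set a := x ⬝ᵥ (Abar t₁ *ᵥ x)
    have hfin : δ^2 * s + 2 * δ * a - x ⬝ᵥ (Q t₁ *ᵥ x) + δ * lam < 0 := by
      have h1 : δ^2 * s ≤ δ * (Cp * Cs) := by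
        have h2 : δ^2 * s ≤ δ^2 * Cs := by nlinarith [sq_nonneg δ, hsB.2]
        nlinarith [mul_le_mul_of_nonneg_right hδCp (mul_nonneg hδ0.le hCs0), hδ0]
      have h3 : 2 * δ * a ≤ 2 * δ * Ca := by nlinarith [haB.2, hδ0]
      have h4 : δ * lam = -(δ * (Cp * Cs + 2 * Ca + 1)) := by rw [hlam]; ring
      nlinarith [hq4, hδ0]
    linarith
  -- conclude positive semidefiniteness
  intro t ht
  refine PosSemidef.of_dotProduct_mulVec_nonneg ?_ ?_
  · show (P t)ᴴ = P t
    rw [conjTranspose_eq_transpose_of_trivial]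
    exact (hPsymm t ht).eq
  · intro y
    rw [star_trivial]
    refine dp_scale _ (fun u hu => ?_) y
    by_contra hneg
    push_neg at hneg
    set E : ℝ := Real.exp (lam * (t - T)) with hEdef
    have hE : 0 < E := Real.exp_pos _
    have hEne : E ≠ 0 := ne_of_gt hE
    have hkey := key (-(u ⬝ᵥ (P t *ᵥ u)) / (2 * E))
      (div_pos (neg_pos.mpr hneg) (by positivity)) t ht u hu
    rw [← hEdef] at hkey
    have h7 : -(u ⬝ᵥ (P t *ᵥ u)) / (2 * E) * E = -(u ⬝ᵥ (P t *ᵥ u)) / 2 := by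
      field_simp
    rw [h7] at hkey
    linarith
end

section
/- Let T > 0, γ ∈ (0,1), β ∈ ℝ, and let k : [0,T] → ℝ be continuous. Suppose p : [0,T] → ℝ is continuously differentiable with p(t) > 0 for all t, p(T) = 1, and p'(t) = −(γ/(1−γ)) k(t) p(t) − e^{−βt/(1−γ)} on [0,T]. Then for every continuous c : [0,T] → [0,∞), every s₀ > 0, and every continuously differentiable S : [0,T] → (0,∞) with S(0) = s₀ and S'(t) = k(t) S(t) − c(t) on [0,T], one has ∫_0^T e^{−βt} c(t)^γ / γ dt + S(T)^γ / γ ≤ (1/γ) p(0)^{1−γ} s₀^γ, with equality if c(t) = e^{−βt/(1−γ)} S(t) / p(t) for all t ∈ [0,T]. -/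
open MeasureTheory intervalIntegral

lemma consumption_key (γ x P Z : ℝ) (hγ0 : 0 < γ) (hγ1 : γ < 1) (hP : 0 < P) (hZ : 0 < Z) :
    (∀ c : ℝ, 0 ≤ c →
      Real.exp x * c ^ γ / γ - P ^ (1 - γ) * Z ^ (γ - 1) * c
        ≤ (1 - γ) / γ * (Real.exp (x / (1 - γ)) * P ^ (-γ) * Z ^ γ)) ∧
    Real.exp x * (Real.exp (x / (1 - γ)) * Z / P) ^ γ / γ
        - P ^ (1 - γ) * Z ^ (γ - 1) * (Real.exp (x / (1 - γ)) * Z / P)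
      = (1 - γ) / γ * (Real.exp (x / (1 - γ)) * P ^ (-γ) * Z ^ γ) := by
  have h1γ : (0:ℝ) < 1 - γ := by linarith
  set K : ℝ := Real.exp (x / (1 - γ)) * Z / P with hKdef
  have hK : 0 < K := by positivity
  have hKpow : ∀ y : ℝ, K ^ y = Real.exp (x / (1 - γ) * y) * (Z ^ y * (P ^ y)⁻¹) := by
    intro y
    rw [hKdef, Real.div_rpow (by positivity) hP.le,
      Real.mul_rpow (Real.exp_pos _).le hZ.le, ← Real.exp_mul, div_eq_mul_inv, mul_assoc]
  have e1 : Real.exp x * K ^ (γ - 1) = P ^ (1 - γ) * Z ^ (γ - 1) := by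
    rw [hKpow, ← mul_assoc, ← Real.exp_add,
      show x + x / (1 - γ) * (γ - 1) = 0 by field_simp; ring,
      Real.exp_zero, one_mul, ← Real.rpow_neg hP.le, show -(γ - 1) = 1 - γ by ring, mul_comm]
  have e2 : Real.exp x * K ^ γ = Real.exp (x / (1 - γ)) * P ^ (-γ) * Z ^ γ := by
    rw [hKpow, ← mul_assoc, ← Real.exp_add,
      show x + x / (1 - γ) * γ = x / (1 - γ) by field_simp; ring,
      ← Real.rpow_neg hP.le]
    ring
  have e3 : K ^ γ = K ^ (γ - 1) * K := by
    have := Real.rpow_add_one hK.ne' (γ - 1)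
    rwa [sub_add_cancel] at this
  have e4 : K ^ (γ - 1) * K ^ (1 - γ) = 1 := by
    rw [← Real.rpow_add hK, show γ - 1 + (1 - γ) = 0 by ring, Real.rpow_zero]
  constructor
  · intro c hc
    have amgm : c ^ γ * K ^ (1 - γ) ≤ γ * c + (1 - γ) * K :=
      Real.geom_mean_le_arith_mean2_weighted hγ0.le h1γ.le hc hK.le (by ring)
    have hpos : (0:ℝ) ≤ Real.exp x * K ^ (γ - 1) := by positivity
    have h2 := mul_le_mul_of_nonneg_left amgm hpos
    have lhs_eq : Real.exp x * K ^ (γ - 1) * (c ^ γ * K ^ (1 - γ)) = Real.exp x * c ^ γ := by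
      calc Real.exp x * K ^ (γ - 1) * (c ^ γ * K ^ (1 - γ))
          = Real.exp x * c ^ γ * (K ^ (γ - 1) * K ^ (1 - γ)) := by ring
        _ = Real.exp x * c ^ γ := by rw [e4, mul_one]
    have rhs_eq : Real.exp x * K ^ (γ - 1) * (γ * c + (1 - γ) * K)
        = γ * (P ^ (1 - γ) * Z ^ (γ - 1) * c)
          + (1 - γ) * (Real.exp (x / (1 - γ)) * P ^ (-γ) * Z ^ γ) := by
      have expand : Real.exp x * K ^ (γ - 1) * (γ * c + (1 - γ) * K)
          = γ * (Real.exp x * K ^ (γ - 1) * c) + (1 - γ) * (Real.exp x * (K ^ (γ - 1) * K)) := by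
        ring
      rw [expand, e1, ← e3, e2]
    rw [lhs_eq, rhs_eq] at h2
    have g1 : Real.exp x * c ^ γ / γ - P ^ (1 - γ) * Z ^ (γ - 1) * c
        = (Real.exp x * c ^ γ - γ * (P ^ (1 - γ) * Z ^ (γ - 1) * c)) / γ := by
      field_simp
    have g2 : (1 - γ) / γ * (Real.exp (x / (1 - γ)) * P ^ (-γ) * Z ^ γ)
        = (1 - γ) * (Real.exp (x / (1 - γ)) * P ^ (-γ) * Z ^ γ) / γ := by ring
    rw [g1, g2, div_le_div_iff_of_pos_right hγ0]
    linarith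
  · have hqK : P ^ (1 - γ) * Z ^ (γ - 1) * K = Real.exp (x / (1 - γ)) * P ^ (-γ) * Z ^ γ := by
      rw [← e1, mul_assoc, ← e3, e2]
    rw [hqK, e2]
    field_simp

/-- Deterministic verification theorem for the power-utility optimal
consumption problem after the delay reduction: if `p > 0` solves
`p' = -(γ/(1-γ)) k p - e^{-βt/(1-γ)}` with `p(T) = 1`, then for every continuous
nonnegative consumption `c` and every positive trajectory `S' = k S - c`, `S(0) = s₀ > 0`,
`∫_0^T e^{-βt} c(t)^γ/γ dt + S(T)^γ/γ ≤ (1/γ) p(0)^{1-γ} s₀^γ`, with equality for the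
feedback consumption `c = e^{-βt/(1-γ)} S / p`. -/
theorem consumption_verification
    (T γ β : ℝ) (hT : 0 < T) (hγ0 : 0 < γ) (hγ1 : γ < 1)
    (k : ℝ → ℝ) (hk : ContinuousOn k (Set.Icc 0 T))
    (p : ℝ → ℝ) (hp_pos : ∀ t ∈ Set.Icc (0 : ℝ) T, 0 < p t) (hpT : p T = 1)
    (hp : ∀ t ∈ Set.Icc (0 : ℝ) T,
      HasDerivWithinAt p (-(γ / (1 - γ)) * k t * p t - Real.exp (-(β * t) / (1 - γ)))
        (Set.Icc 0 T) t) :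
    ∀ c : ℝ → ℝ, ContinuousOn c (Set.Icc 0 T) → (∀ t ∈ Set.Icc (0 : ℝ) T, 0 ≤ c t) →
    ∀ s₀ : ℝ, 0 < s₀ →
    ∀ S : ℝ → ℝ, S 0 = s₀ → (∀ t ∈ Set.Icc (0 : ℝ) T, 0 < S t) →
      (∀ t ∈ Set.Icc (0 : ℝ) T, HasDerivWithinAt S (k t * S t - c t) (Set.Icc 0 T) t) →
      (∫ t in (0 : ℝ)..T, Real.exp (-(β * t)) * c t ^ γ / γ) + S T ^ γ / γ
          ≤ 1 / γ * p 0 ^ (1 - γ) * s₀ ^ γ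
        ∧ ((∀ t ∈ Set.Icc (0 : ℝ) T, c t = Real.exp (-(β * t) / (1 - γ)) * S t / p t) →
            (∫ t in (0 : ℝ)..T, Real.exp (-(β * t)) * c t ^ γ / γ) + S T ^ γ / γ
              = 1 / γ * p 0 ^ (1 - γ) * s₀ ^ γ) := by
  intro c hc hc0 s₀ hs₀ S hS0 hS_pos hS
  have h1γ : (0:ℝ) < 1 - γ := by linarith
  have hT0 : (0:ℝ) ∈ Set.Icc (0:ℝ) T := ⟨le_refl 0, hT.le⟩
  have hTT : T ∈ Set.Icc (0:ℝ) T := ⟨hT.le, le_refl T⟩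
  -- value function and its derivative
  set G : ℝ → ℝ := fun t =>
    -((1 - γ) / γ * (Real.exp (-(β * t) / (1 - γ)) * p t ^ (-γ) * S t ^ γ))
      - p t ^ (1 - γ) * S t ^ (γ - 1) * c t with hGdef
  set g : ℝ → ℝ := fun t => p t ^ (1 - γ) * S t ^ γ / γ with hgdef
  have hpc : ContinuousOn p (Set.Icc 0 T) := fun t ht => (hp t ht).continuousWithinAt
  have hSc : ContinuousOn S (Set.Icc 0 T) := fun t ht => (hS t ht).continuousWithinAt
  have hg : ∀ t ∈ Set.Icc (0:ℝ) T, HasDerivWithinAt g (G t) (Set.Icc 0 T) t := by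
    intro t ht
    have hpt := hp_pos t ht
    have hst := hS_pos t ht
    have h1 : HasDerivWithinAt (fun u => p u ^ (1 - γ))
        ((-(γ / (1 - γ)) * k t * p t - Real.exp (-(β * t) / (1 - γ))) * (1 - γ) * p t ^ (1 - γ - 1))
        (Set.Icc 0 T) t := (hp t ht).rpow_const (Or.inl hpt.ne')
    have h2 : HasDerivWithinAt (fun u => S u ^ γ)
        ((k t * S t - c t) * γ * S t ^ (γ - 1)) (Set.Icc 0 T) t :=
      (hS t ht).rpow_const (Or.inl hst.ne')
    have h3 := (h1.mul h2).div_const γ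
    refine h3.congr_deriv ?_
    have f1 : (1 - γ - 1 : ℝ) = -γ := by ring
    rw [f1]
    have f2 : p t ^ (1 - γ) = p t ^ (-γ) * p t := by
      have := Real.rpow_add_one hpt.ne' (-γ)
      rwa [show (-γ + 1 : ℝ) = 1 - γ by ring] at this
    have f3 : S t ^ γ = S t ^ (γ - 1) * S t := by
      have := Real.rpow_add_one hst.ne' (γ - 1)
      rwa [sub_add_cancel] at this
    rw [hGdef]
    simp only
    rw [f2, f3]
    field_simp
    ring
  -- continuity / integrability
  have hgcont : ContinuousOn g (Set.Icc 0 T) := fun t ht => (hg t ht).continuousWithinAt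
  have hEc : ContinuousOn (fun t => Real.exp (-(β * t) / (1 - γ))) (Set.Icc 0 T) :=
    (Real.continuous_exp.comp (by continuity)).continuousOn
  have hpB : ContinuousOn (fun t => p t ^ (-γ)) (Set.Icc 0 T) :=
    hpc.rpow_const fun t ht => Or.inl (hp_pos t ht).ne'
  have hpA : ContinuousOn (fun t => p t ^ (1 - γ)) (Set.Icc 0 T) :=
    hpc.rpow_const fun t ht => Or.inl (hp_pos t ht).ne'
  have hSC : ContinuousOn (fun t => S t ^ γ) (Set.Icc 0 T) :=
    hSc.rpow_const fun t ht => Or.inl (hS_pos t ht).ne'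
  have hSD : ContinuousOn (fun t => S t ^ (γ - 1)) (Set.Icc 0 T) :=
    hSc.rpow_const fun t ht => Or.inl (hS_pos t ht).ne'
  have hGcont : ContinuousOn G (Set.Icc 0 T) := by
    rw [hGdef]
    exact ((continuousOn_const.mul ((hEc.mul hpB).mul hSC)).neg).sub ((hpA.mul hSD).mul hc)
  have hGint : IntervalIntegrable G volume 0 T :=
    (hGcont.mono (by rw [Set.uIcc_of_le hT.le])).intervalIntegrable
  have hFc : ContinuousOn (fun t => Real.exp (-(β * t)) * c t ^ γ / γ) (Set.Icc 0 T) :=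
    (((Real.continuous_exp.comp (by continuity)).continuousOn.mul
      (hc.rpow_const fun t ht => Or.inr hγ0.le)).div_const γ)
  have hFint : IntervalIntegrable (fun t => Real.exp (-(β * t)) * c t ^ γ / γ) volume 0 T :=
    (hFc.mono (by rw [Set.uIcc_of_le hT.le])).intervalIntegrable
  -- FTC
  have hFTC : ∫ t in (0:ℝ)..T, G t = g T - g 0 := by
    apply integral_eq_sub_of_hasDeriv_right_of_le hT.le hgcont _ hGint
    intro x hx
    exact ((hg x (Set.Ioo_subset_Icc_self hx)).hasDerivAt
      (Icc_mem_nhds hx.1 hx.2)).hasDerivWithinAt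
  have hg0 : g 0 = 1 / γ * p 0 ^ (1 - γ) * s₀ ^ γ := by
    rw [hgdef]; simp only [hS0]; ring
  have hgT : g T = S T ^ γ / γ := by
    rw [hgdef]; simp only [hpT, Real.one_rpow, one_mul]
  -- pointwise inequality
  have hpw : ∀ t ∈ Set.Icc (0:ℝ) T, Real.exp (-(β * t)) * c t ^ γ / γ ≤ -G t := by
    intro t ht
    have key := (consumption_key γ (-(β * t)) (p t) (S t) hγ0 hγ1
      (hp_pos t ht) (hS_pos t ht)).1 (c t) (hc0 t ht)
    rw [hGdef]
    simp only
    linarith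
  constructor
  · have hle : (∫ t in (0:ℝ)..T, Real.exp (-(β * t)) * c t ^ γ / γ)
        ≤ ∫ t in (0:ℝ)..T, -G t :=
      integral_mono_on hT.le hFint hGint.neg hpw
    rw [intervalIntegral.integral_neg, hFTC] at hle
    rw [hg0] at *
    rw [hgT] at hFTC hle
    linarith
  · intro hfb
    have hpw' : Set.EqOn (fun t => Real.exp (-(β * t)) * c t ^ γ / γ) (fun t => -G t)
        (Set.uIcc 0 T) := by
      rw [Set.uIcc_of_le hT.le]
      intro t ht
      have key := (consumption_key γ (-(β * t)) (p t) (S t) hγ0 hγ1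
        (hp_pos t ht) (hS_pos t ht)).2
      rw [← hfb t ht] at key
      simp only [hGdef]
      linarith
    have : (∫ t in (0:ℝ)..T, Real.exp (-(β * t)) * c t ^ γ / γ)
        = ∫ t in (0:ℝ)..T, -G t := integral_congr hpw'
    rw [intervalIntegral.integral_neg, hFTC] at this
    rw [this, hgT, hg0]
    ring
end
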